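/- arXiv:1003.3070 — 2 statements merged into one kernel-verified Lean document; each statement's English description precedes it below -/
import Mathlib

section
/- Let V : ℝ → ℝ be a non-constant real analytic function whose derivative V' does not change sign on ℝ. Let h : ℝ → ℝ be a real analytic function and let μ be the Borel probability measure on ℝ with density dμ(t) = (1/π)·√(h⁺(t)) dt, where h⁺(t) = max(h(t), 0). Suppose that for every x the logarithmic potential U^μ(x) = ∫ ln(1/|x−t|) dμ(t) is well defined, and that there is a constant F with U^μ(x) + V(x) = F for all x in the support of μ and U^μ(x) + V(x) ≥ F for all x ∈ ℝ. Then the support of μ is an unbounded subset of ℝ. -/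
open MeasureTheory Real Filter Set

/-- Truncated Hilbert transform integral at level `ε`:
`(1/π) ∫_{|x-t|>ε} f(t)/(x-t) dt`. -/
noncomputable def truncHilbert (f : ℝ → ℝ) (x ε : ℝ) : ℝ :=
  (1 / Real.pi) * ∫ t in {t : ℝ | ε < |x - t|}, f t / (x - t)

/-- `HilbertAt f x L` : the principal-value Hilbert transform of `f` at `x` exists
and equals `L`. -/
def HilbertAt (f : ℝ → ℝ) (x L : ℝ) : Prop :=
  Filter.Tendsto (fun ε => truncHilbert f x ε) (nhdsWithin 0 (Set.Ioi 0)) (nhds L)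

/-- The support of a Borel measure on `ℝ`: the set of points every neighborhood of
which has positive measure. -/
noncomputable def measSupport (μ : Measure ℝ) : Set ℝ := {x | ∀ U ∈ nhds x, 0 < μ U}

/-- The complement of the support of a Borel measure on `ℝ` is null. -/
lemma compl_measSupport_null (μ : Measure ℝ) : μ (measSupport μ)ᶜ = 0 := by
  set S : Set (Set ℝ) := {s | IsOpen s ∧ μ s = 0} with hS
  obtain ⟨T, Tcount, TS, hT⟩ := TopologicalSpace.isOpen_sUnion_countable S (fun s hs => hs.1)
  have hTnull : μ (⋃₀ T) = 0 := by
    apply (measure_sUnion_null_iff Tcount).2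
    intro s hs
    exact (TS hs).2
  have hsub : (measSupport μ)ᶜ ⊆ ⋃₀ T := by
    intro x hx
    rw [hT]
    simp only [measSupport, mem_compl_iff, mem_setOf_eq, not_forall] at hx
    obtain ⟨U, hU, hUpos⟩ := hx
    have hU0 : μ U = 0 := by
      by_contra h0
      exact hUpos (pos_iff_ne_zero.2 h0)
    refine ⟨interior U, ⟨isOpen_interior, ?_⟩, mem_interior_iff_mem_nhds.2 hU⟩
    exact measure_mono_null interior_subset hU0
  exact measure_mono_null hsub hTnull

/-- If the support of a probability measure lies in `closedBall 0 R`, then the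
logarithmic potential at a far away point `x` is at most `-s`. -/
lemma potential_small (μ : Measure ℝ) [IsProbabilityMeasure μ] (R s x : ℝ)
    (hsub : measSupport μ ⊆ Metric.closedBall (0:ℝ) R)
    (hint : Integrable (fun t => Real.log (1 / |x - t|)) μ)
    (hx : Real.exp s + max R 0 ≤ |x|) :
    (∫ t, Real.log (1 / |x - t|) ∂μ) ≤ -s := by
  have hae : ∀ᵐ t ∂μ, t ∈ measSupport μ := by
    rw [ae_iff]
    exact compl_measSupport_null μ
  have hbd : ∀ᵐ t ∂μ, Real.log (1 / |x - t|) ≤ -s := by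
    filter_upwards [hae] with t ht
    have htR : |t| ≤ max R 0 := by
      have := hsub ht
      simp only [Metric.mem_closedBall, Real.dist_eq, sub_zero] at this
      exact this.trans (le_max_left _ _)
    have hdist : Real.exp s ≤ |x - t| := by
      have h1 : |x| - |t| ≤ |x - t| := abs_sub_abs_le_abs_sub x t
      linarith
    have hlog : s ≤ Real.log |x - t| := by
      calc s = Real.log (Real.exp s) := (Real.log_exp s).symm
        _ ≤ Real.log |x - t| := Real.log_le_log (Real.exp_pos s) hdist
    rw [one_div, Real.log_inv]
    linarith
  calc (∫ t, Real.log (1 / |x - t|) ∂μ) ≤ ∫ _, (-s) ∂μ :=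
        integral_mono_ae hint (integrable_const _) hbd
    _ = -s := by simp

theorem equilibrium_support_unbounded
    (V h : ℝ → ℝ)
    (hV : AnalyticOnNhd ℝ V Set.univ)
    (hVnonconst : ¬ ∃ c : ℝ, ∀ x : ℝ, V x = c)
    (hVsign : (∀ x : ℝ, 0 ≤ deriv V x) ∨ (∀ x : ℝ, deriv V x ≤ 0))
    (hh : AnalyticOnNhd ℝ h Set.univ)
    (μ : Measure ℝ)
    (hμ : μ = MeasureTheory.volume.withDensity
      (fun t => ENNReal.ofReal ((1 / Real.pi) * Real.sqrt (max (h t) 0))))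
    (hprob : IsProbabilityMeasure μ)
    (hUdef : ∀ x : ℝ, Integrable (fun t => Real.log (1 / |x - t|)) μ)
    (F : ℝ)
    (heq : ∀ x ∈ measSupport μ, (∫ t, Real.log (1 / |x - t|) ∂μ) + V x = F)
    (hge : ∀ x : ℝ, F ≤ (∫ t, Real.log (1 / |x - t|) ∂μ) + V x) :
    ¬ Bornology.IsBounded (measSupport μ) := by
  intro hb
  obtain ⟨R, hR⟩ := hb.subset_closedBall 0
  have hdiff : Differentiable ℝ V := fun x => (hV x (mem_univ x)).differentiableAt
  set s : ℝ := V 0 - F + 1 with hs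
  rcases hVsign with hpos | hneg
  · -- V monotone; go to -∞
    have hmono : Monotone V := monotone_of_deriv_nonneg hdiff hpos
    set x : ℝ := -(Real.exp s + max R 0) with hxdef
    have hx : Real.exp s + max R 0 ≤ |x| := by
      rw [hxdef, abs_neg, abs_of_pos (by positivity)]
    have hpot := potential_small μ R s x hR (hUdef x) hx
    have hVx : V x ≤ V 0 := by
      apply hmono
      rw [hxdef]
      have := Real.exp_pos s
      have := le_max_right R 0
      linarith
    have := hge x
    rw [hs] at hpot
    linarith
  · -- V antitone; go to +∞
    have hmono : Antitone V := antitone_of_deriv_nonpos hdiff hneg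
    set x : ℝ := Real.exp s + max R 0 with hxdef
    have hx : Real.exp s + max R 0 ≤ |x| := by
      rw [hxdef, abs_of_pos (by positivity)]
    have hpot := potential_small μ R s x hR (hUdef x) hx
    have hVx : V x ≤ V 0 := by
      apply hmono
      rw [hxdef]
      have := Real.exp_pos s
      have := le_max_right R 0
      linarith
    have := hge x
    rw [hs] at hpot
    linarith
end

section
/- For all real numbers a and b, (1/π) ∫_{-∞}^{∞} ln|(x−a)/(x−b)| · 1/(1+x²) dx = ln √((a²+1)/(b²+1)). -/
open MeasureTheory Real Set

private lemma neg_log_le_aux {t : ℝ} (ht : 0 < t) : -Real.log t ≤ 2 * t ^ (-(1/2) : ℝ) := by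
  have h1 : Real.log (t ^ (-(1/2):ℝ)) ≤ t ^ (-(1/2):ℝ) - 1 :=
    Real.log_le_sub_one_of_pos (Real.rpow_pos_of_pos ht _)
  rw [Real.log_rpow ht] at h1
  nlinarith [Real.rpow_pos_of_pos ht (-(1/2):ℝ)]

private lemma abs_rpow_split {x : ℝ} (hx : x ≠ 0) :
    |x| ^ (-(1/2) : ℝ) = x ^ (-(1/2):ℝ) + (-x) ^ (-(1/2):ℝ) := by
  have hc : Real.cos (-(1/2) * π) = 0 := by
    rw [show (-(1/2) * π : ℝ) = -(π/2) by ring, Real.cos_neg, Real.cos_pi_div_two]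
  rcases hx.lt_or_gt with h | h
  · rw [abs_of_neg h, Real.rpow_def_of_neg h, hc]; simp
  · rw [abs_of_pos h, Real.rpow_def_of_neg (by linarith : -x < 0), hc]; simp

private lemma dom_intervalIntegrable (u v : ℝ) :
    IntervalIntegrable (fun x : ℝ => 4 * (x ^ (-(1/2):ℝ) + (-x) ^ (-(1/2):ℝ))) volume u v := by
  have h1 : IntervalIntegrable (fun x : ℝ => x ^ (-(1/2):ℝ)) volume u v :=
    intervalIntegral.intervalIntegrable_rpow' (by norm_num)
  have h2 : IntervalIntegrable (fun x : ℝ => x ^ (-(1/2):ℝ)) volume (-u) (-v) :=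
    intervalIntegral.intervalIntegrable_rpow' (by norm_num)
  have h3 := (h2.comp_mul_left (c := -1) enorm_ne_top enorm_ne_top)
  norm_num at h3
  exact ((h1.add h3).const_mul 4)

private lemma logsin_int_base :
    IntervalIntegrable (fun θ : ℝ => Real.log |Real.sin θ|) volume (-(π/2)) (π/2) := by
  have hm : AEStronglyMeasurable (fun θ : ℝ => Real.log |Real.sin θ|)
      (volume.restrict (Set.uIoc (-(π/2)) (π/2))) :=
    (Real.measurable_log.comp
      (measurable_abs.comp Real.continuous_sin.measurable)).aestronglyMeasurable
  refine (dom_intervalIntegrable _ _).mono_fun hm ?_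
  refine (ae_restrict_iff' measurableSet_uIoc).2 (Filter.Eventually.of_forall fun θ hθ => ?_)
  have hpi := Real.pi_pos
  rw [Set.uIoc_of_le (by linarith), Set.mem_Ioc] at hθ
  have habs : |θ| ≤ π/2 := abs_le.2 ⟨by linarith, hθ.2⟩
  rcases eq_or_ne θ 0 with rfl | hθ0
  · simp [Real.norm_eq_abs]
  · have hθa : 0 < |θ| := abs_pos.2 hθ0
    have hlow : 2/π * |θ| ≤ |Real.sin θ| := Real.mul_abs_le_abs_sin habs
    have hlp : (0:ℝ) < 2/π * |θ| := by positivity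
    have hsp : 0 < |Real.sin θ| := lt_of_lt_of_le hlp hlow
    have hup : Real.log |Real.sin θ| ≤ 0 :=
      Real.log_nonpos (abs_nonneg _) (abs_sin_le_one θ)
    have h1 : -Real.log |Real.sin θ| ≤ -Real.log (2/π * |θ|) := by
      have := Real.log_le_log hlp hlow
      linarith
    have h2 : -Real.log (2/π * |θ|) ≤ 2 * (2/π * |θ|) ^ (-(1/2):ℝ) := neg_log_le_aux hlp
    have h3 : (2/π * |θ|) ^ (-(1/2):ℝ) = (2/π) ^ (-(1/2):ℝ) * |θ| ^ (-(1/2):ℝ) :=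
      Real.mul_rpow (by positivity) (abs_nonneg _)
    have h4 : (2/π : ℝ) ^ (-(1/2):ℝ) ≤ 2 := by
      have hq : ((1:ℝ)/4) ^ (-(1/2):ℝ) = 2 := by
        rw [Real.rpow_neg (by norm_num), ← Real.sqrt_eq_rpow,
          show (1/4:ℝ) = (1/2)^2 by norm_num, Real.sqrt_sq (by norm_num)]
        norm_num
      have hle : (1/4:ℝ) ≤ 2/π := by
        rw [div_le_div_iff₀ (by norm_num) hpi]
        nlinarith [Real.pi_le_four]
      have h := Real.rpow_le_rpow_of_nonpos (show (0:ℝ) < 1/4 by norm_num) hle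
        (show (-(1/2):ℝ) ≤ 0 by norm_num)
      rw [hq] at h
      exact h
    have h5 : 0 ≤ |θ| ^ (-(1/2):ℝ) := Real.rpow_nonneg (abs_nonneg _) _
    have hnorm : ‖Real.log |Real.sin θ|‖ = -Real.log |Real.sin θ| := by
      rw [Real.norm_eq_abs, abs_of_nonpos hup]
    show ‖Real.log |Real.sin θ|‖ ≤ ‖4 * (θ ^ (-(1/2):ℝ) + (-θ) ^ (-(1/2):ℝ))‖
    rw [hnorm, Real.norm_eq_abs, ← abs_rpow_split hθ0]
    have hb : -Real.log |Real.sin θ| ≤ 4 * |θ| ^ (-(1/2):ℝ) := by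
      calc -Real.log |Real.sin θ| ≤ 2 * ((2/π) ^ (-(1/2):ℝ) * |θ| ^ (-(1/2):ℝ)) := by
            rw [← h3]; linarith
        _ ≤ 4 * |θ| ^ (-(1/2):ℝ) := by nlinarith
    calc -Real.log |Real.sin θ| ≤ 4 * |θ| ^ (-(1/2):ℝ) := hb
      _ ≤ |4 * |θ| ^ (-(1/2):ℝ)| := le_abs_self _

private lemma logsin_periodic : Function.Periodic (fun θ : ℝ => Real.log |Real.sin θ|) π :=
  fun θ => by simp [Real.sin_add_pi]

private lemma logsin_int_shift (u v : ℝ) (k : ℤ) (hu : u = -(π/2) + k*π)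
    (hv : v = π/2 + k*π) :
    IntervalIntegrable (fun θ : ℝ => Real.log |Real.sin θ|) volume u v := by
  subst hu hv
  have h := logsin_int_base.comp_sub_right ((k : ℝ)*π)
  have he : (fun x : ℝ => Real.log |Real.sin (x - (k:ℝ)*π)|) =
      fun x : ℝ => Real.log |Real.sin x| := by
    funext x
    have h2 := (logsin_periodic.int_mul (-k)) x
    rw [show x - (k:ℝ)*π = x + ((-k : ℤ):ℝ)*π by push_cast; ring]
    exact h2
  rwa [he] at h

private lemma logsin_int_sym (n : ℕ) :
    IntervalIntegrable (fun θ : ℝ => Real.log |Real.sin θ|) volume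
      (-(π/2) - (n:ℝ)*π) (π/2 + (n:ℝ)*π) := by
  induction n with
  | zero => simpa using logsin_int_base
  | succ n ih =>
    have hl := logsin_int_shift (-(π/2) - ((n:ℝ)+1)*π) (-(π/2) - (n:ℝ)*π) (-((n:ℤ)+1))
      (by push_cast; ring) (by push_cast; ring)
    have hr := logsin_int_shift (π/2 + (n:ℝ)*π) (π/2 + ((n:ℝ)+1)*π) ((n:ℤ)+1)
      (by push_cast; ring) (by push_cast; ring)
    have h := (hl.trans ih).trans hr
    push_cast
    exact h

private lemma logsin_int (t s : ℝ) :
    IntervalIntegrable (fun θ : ℝ => Real.log |Real.sin θ|) volume t s := by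
  obtain ⟨n, hn⟩ := exists_nat_ge ((max |t| |s|) / π)
  have hpi := Real.pi_pos
  have hb : max |t| |s| ≤ (n:ℝ) * π := by
    rw [div_le_iff₀ hpi] at hn; exact hn
  have hnp : 0 ≤ (n:ℝ)*π := by positivity
  have ht := abs_le.1 ((le_max_left |t| |s|).trans hb)
  have hs := abs_le.1 ((le_max_right |t| |s|).trans hb)
  refine (logsin_int_sym n).mono_set ?_
  rw [Set.uIcc_of_le (by linarith : (-(π/2) - (n:ℝ)*π) ≤ (π/2 + (n:ℝ)*π))]
  intro x hx
  rcases Set.mem_uIcc.1 hx with h | h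
  · exact ⟨by linarith [h.1], by linarith [h.2]⟩
  · exact ⟨by linarith [h.1], by linarith [h.2]⟩

private lemma tan_hasDeriv : ∀ θ ∈ Ioo (-(π/2)) (π/2),
    HasDerivWithinAt Real.tan (1/Real.cos θ^2) (Ioo (-(π/2)) (π/2)) θ :=
  fun θ hθ => (Real.hasDerivAt_tan (ne_of_gt (Real.cos_pos_of_mem_Ioo hθ))).hasDerivWithinAt

private lemma subst_integral (g : ℝ → ℝ) :
    ∫ x, g x = ∫ θ in Ioo (-(π/2)) (π/2), |1/Real.cos θ^2| * g (Real.tan θ) := by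
  have h := integral_image_eq_integral_abs_deriv_smul measurableSet_Ioo tan_hasDeriv
    Real.injOn_tan g
  rw [Real.image_tan_Ioo] at h
  simpa [smul_eq_mul] using h

private lemma subst_integrable (g : ℝ → ℝ) :
    Integrable g ↔
      IntegrableOn (fun θ => |1/Real.cos θ^2| * g (Real.tan θ)) (Ioo (-(π/2)) (π/2)) := by
  have h := integrableOn_image_iff_integrableOn_abs_deriv_smul measurableSet_Ioo tan_hasDeriv
    Real.injOn_tan g
  rw [Real.image_tan_Ioo] at h
  simp only [← integrableOn_univ, smul_eq_mul] at *
  exact h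

private lemma log_tan_sub_eq (c : ℝ) {θ : ℝ} (hθ : θ ∈ Ioo (-(π/2)) (π/2))
    (hne : θ ≠ Real.arctan c) :
    Real.log |Real.tan θ - c| =
      Real.log (Real.sqrt (1+c^2)) + Real.log |Real.sin (θ - Real.arctan c)|
        - Real.log |Real.sin (θ + π/2)| := by
  set φ := Real.arctan c with hφ
  have hcos : 0 < Real.cos θ := Real.cos_pos_of_mem_Ioo hθ
  have hsq : (0:ℝ) < 1 + c^2 := by positivity
  have hsqrt : 0 < Real.sqrt (1+c^2) := Real.sqrt_pos.2 hsq
  have hsin0 : Real.sin (θ - φ) ≠ 0 := by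
    rw [Ne, Real.sin_eq_zero_iff_of_lt_of_lt]
    · exact sub_ne_zero.2 hne
    · have := Real.arctan_lt_pi_div_two c; have := hθ.1; simp only [← hφ] at *; linarith
    · have := Real.neg_pi_div_two_lt_arctan c; have := hθ.2; simp only [← hφ] at *; linarith
  have key1 : Real.sin θ - c * Real.cos θ = Real.sqrt (1+c^2) * Real.sin (θ - φ) := by
    rw [Real.sin_sub, hφ, Real.cos_arctan, Real.sin_arctan]
    field_simp
    try ring
  have hnum : Real.sin θ - c * Real.cos θ ≠ 0 := by
    rw [key1]; exact mul_ne_zero (ne_of_gt hsqrt) hsin0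
  have key2 : Real.tan θ - c = (Real.sin θ - c * Real.cos θ) / Real.cos θ := by
    rw [Real.tan_eq_sin_div_cos]; field_simp; try ring
  rw [key2, abs_div, Real.log_div (abs_ne_zero.2 hnum) (abs_ne_zero.2 (ne_of_gt hcos)),
    key1, abs_mul, abs_of_pos hsqrt, Real.log_mul (ne_of_gt hsqrt) (abs_ne_zero.2 hsin0),
    ← Real.sin_add_pi_div_two]

private lemma D_intervalIntegrable (c : ℝ) (t s : ℝ) :
    IntervalIntegrable (fun θ : ℝ => Real.log (Real.sqrt (1+c^2)) +
      Real.log |Real.sin (θ - Real.arctan c)| - Real.log |Real.sin (θ + π/2)|) volume t s := by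
  have h1 : IntervalIntegrable (fun θ : ℝ => Real.log |Real.sin (θ - Real.arctan c)|)
      volume t s := by
    have := (logsin_int (t - Real.arctan c) (s - Real.arctan c)).comp_sub_right (Real.arctan c)
    simpa using this
  have h2 : IntervalIntegrable (fun θ : ℝ => Real.log |Real.sin (θ + π/2)|) volume t s := by
    have := (logsin_int (t + π/2) (s + π/2)).comp_add_right (π/2)
    simpa using this
  exact ((intervalIntegrable_const.add h1).sub h2)

private lemma integral_log_abs_sub (c : ℝ) :
    Integrable (fun x : ℝ => Real.log |x - c| / (1 + x^2)) ∧
    ∫ x : ℝ, Real.log |x - c| / (1 + x^2) = π * Real.log (Real.sqrt (1+c^2)) := by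
  have hpi := Real.pi_pos
  have hle : -(π/2) ≤ π/2 := by linarith
  set φ := Real.arctan c with hφ
  set f := fun x : ℝ => Real.log |x - c| / (1+x^2) with hf
  set D := fun θ : ℝ => Real.log (Real.sqrt (1+c^2)) + Real.log |Real.sin (θ - φ)|
      - Real.log |Real.sin (θ + π/2)| with hD
  have hpt : ∀ θ ∈ Ioo (-(π/2)) (π/2),
      |1/Real.cos θ^2| * f (Real.tan θ) = Real.log |Real.tan θ - c| := by
    intro θ hθ
    have hcos := Real.cos_pos_of_mem_Ioo hθ
    have h1 : 1 + Real.tan θ^2 = 1 / Real.cos θ^2 := by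
      rw [one_div, ← Real.inv_one_add_tan_sq (ne_of_gt hcos), inv_inv]
    have h2 : (0:ℝ) < 1 + Real.tan θ^2 := by positivity
    simp only [hf]
    rw [← h1, abs_of_pos h2]
    field_simp
  have hae : (fun θ : ℝ => Real.log |Real.tan θ - c|)
      =ᵐ[volume.restrict (Ioo (-(π/2)) (π/2))] D := by
    have h0 : ∀ᵐ θ : ℝ, θ ≠ φ := by
      rw [ae_iff]
      simp only [ne_eq, not_not, setOf_eq_eq_singleton]
      exact measure_singleton φ
    filter_upwards [ae_restrict_of_ae h0, ae_restrict_mem measurableSet_Ioo] with θ hneq hmem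
    exact log_tan_sub_eq c hmem hneq
  have hDint : IntegrableOn D (Ioo (-(π/2)) (π/2)) volume := by
    have h := (D_intervalIntegrable c (-(π/2)) (π/2))
    rwa [intervalIntegrable_iff_integrableOn_Ioo_of_le hle] at h
  have hTint : IntegrableOn (fun θ : ℝ => Real.log |Real.tan θ - c|)
      (Ioo (-(π/2)) (π/2)) volume := hDint.congr hae.symm
  have hint : Integrable f := by
    rw [subst_integrable]
    refine hTint.congr ?_
    filter_upwards [ae_restrict_mem measurableSet_Ioo] with θ hθ
    exact (hpt θ hθ).symm
  refine ⟨hint, ?_⟩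
  rw [subst_integral f, setIntegral_congr_fun measurableSet_Ioo (fun θ hθ => hpt θ hθ),
    integral_congr_ae hae]
  have hio : ∫ θ in Ioo (-(π/2)) (π/2), D θ = ∫ θ in (-(π/2))..(π/2), D θ := by
    rw [intervalIntegral.integral_of_le hle, integral_Ioc_eq_integral_Ioo]
  rw [hio]
  have hconst : IntervalIntegrable (fun _ : ℝ => Real.log (Real.sqrt (1+c^2)))
      volume (-(π/2)) (π/2) := intervalIntegrable_const
  have h1 : IntervalIntegrable (fun θ : ℝ => Real.log |Real.sin (θ - φ)|)
      volume (-(π/2)) (π/2) := by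
    simpa using (logsin_int (-(π/2) - φ) (π/2 - φ)).comp_sub_right φ
  have h2 : IntervalIntegrable (fun θ : ℝ => Real.log |Real.sin (θ + π/2)|)
      volume (-(π/2)) (π/2) := by
    have h := (logsin_int 0 π).comp_add_right (π/2)
    rwa [show ((0:ℝ) - π/2) = -(π/2) by ring, show (π - π/2 : ℝ) = π/2 by ring] at h
  have hsplit : ∫ θ in (-(π/2))..(π/2), D θ =
      (∫ _ in (-(π/2))..(π/2), Real.log (Real.sqrt (1+c^2))) +
      (∫ θ in (-(π/2))..(π/2), Real.log |Real.sin (θ - φ)|) -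
      (∫ θ in (-(π/2))..(π/2), Real.log |Real.sin (θ + π/2)|) := by
    rw [hD]
    rw [intervalIntegral.integral_sub (hconst.add h1) h2, intervalIntegral.integral_add hconst h1]
  rw [hsplit]
  have e1 : (∫ _ in (-(π/2))..(π/2), Real.log (Real.sqrt (1+c^2)))
      = π * Real.log (Real.sqrt (1+c^2)) := by
    rw [intervalIntegral.integral_const, show (π/2 - -(π/2)) = π by ring, smul_eq_mul]
  have e2 : (∫ θ in (-(π/2))..(π/2), Real.log |Real.sin (θ - φ)|) =
      ∫ θ in (0:ℝ)..π, Real.log |Real.sin θ| := by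
    rw [intervalIntegral.integral_comp_sub_right (fun θ => Real.log |Real.sin θ|) φ]
    have h := logsin_periodic.intervalIntegral_add_eq (-(π/2) - φ) 0
    rw [show -(π/2) - φ + π = π/2 - φ by ring, zero_add] at h
    exact h
  have e3 : (∫ θ in (-(π/2))..(π/2), Real.log |Real.sin (θ + π/2)|) =
      ∫ θ in (0:ℝ)..π, Real.log |Real.sin θ| := by
    rw [intervalIntegral.integral_comp_add_right (fun θ => Real.log |Real.sin θ|) (π/2),
      show (-(π/2) + π/2 : ℝ) = 0 by ring, show (π/2 + π/2 : ℝ) = π by ring]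
  rw [e1, e2, e3]; ring

theorem integral_log_ratio_div_one_add_sq (a b : ℝ) :
    Integrable (fun x => Real.log |(x - a) / (x - b)| / (1 + x ^ 2)) ∧
    (1 / Real.pi) * ∫ x : ℝ, Real.log |(x - a) / (x - b)| / (1 + x ^ 2) =
      Real.log (Real.sqrt ((a ^ 2 + 1) / (b ^ 2 + 1))) := by
  obtain ⟨hia, hva⟩ := integral_log_abs_sub a
  obtain ⟨hib, hvb⟩ := integral_log_abs_sub b
  have hpi := Real.pi_pos
  have hae : (fun x : ℝ => Real.log |x - a| / (1 + x^2) - Real.log |x - b| / (1 + x^2))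
      =ᵐ[volume] (fun x => Real.log |(x - a) / (x - b)| / (1 + x ^ 2)) := by
    have h0 : ∀ᵐ x : ℝ, x ≠ a := by
      rw [ae_iff]; simp only [ne_eq, not_not, setOf_eq_eq_singleton]; exact measure_singleton a
    have h1 : ∀ᵐ x : ℝ, x ≠ b := by
      rw [ae_iff]; simp only [ne_eq, not_not, setOf_eq_eq_singleton]; exact measure_singleton b
    filter_upwards [h0, h1] with x hxa hxb
    rw [Real.log_abs ((x - a) / (x - b)),
      Real.log_div (sub_ne_zero.2 hxa) (sub_ne_zero.2 hxb),
      ← Real.log_abs (x - a), ← Real.log_abs (x - b), ← sub_div]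
  have hint : Integrable (fun x => Real.log |(x - a) / (x - b)| / (1 + x ^ 2)) :=
    (hia.sub hib).congr hae
  refine ⟨hint, ?_⟩
  rw [← integral_congr_ae hae, integral_sub hia hib, hva, hvb]
  have hb2 : (0:ℝ) < 1 + b^2 := by positivity
  have ha2 : (0:ℝ) < 1 + a^2 := by positivity
  have hsa : Real.sqrt (1+a^2) ≠ 0 := ne_of_gt (Real.sqrt_pos.2 ha2)
  have hsb : Real.sqrt (1+b^2) ≠ 0 := ne_of_gt (Real.sqrt_pos.2 hb2)
  rw [show π * Real.log (Real.sqrt (1+a^2)) - π * Real.log (Real.sqrt (1+b^2))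
      = π * (Real.log (Real.sqrt (1+a^2)) - Real.log (Real.sqrt (1+b^2))) by ring]
  rw [one_div, inv_mul_cancel_left₀ (ne_of_gt hpi)]
  rw [← Real.log_div hsa hsb, ← Real.sqrt_div ha2.le]
  rw [show (a^2+1)/(b^2+1) = (1+a^2)/(1+b^2) by ring]
end
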